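/- For online optimization with multi-step memory cost d(x_t, x_{t−q:t−1}) = ‖x_t − ∑_{i=1}^q C_i x_{t−i}‖, where each hitting cost f(·, y_t) is α-polyhedral and β = ∑_{i=1}^q ‖C_i‖ (induced matrix norm), the Robust algorithm choosing x_t = argmin_x f(x, y_t) at every step is strictly max((β+1)/α, 1)-competitive against the optimal offline algorithm: cost(Robust) ≤ max((β+1)/α, 1)·cost(OPT) for every input. -/

import Mathlib

open Finset

/-- Cumulative cost of action sequence `x` over steps 1..s with multi-step memory cost
‖x_t − ∑_{i=1}^q C_i x_{t−i}‖. Actions are indexed by ℤ to allow the initialization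
x_{−q+1}, …, x_0. -/
noncomputable def costM {E : Type*} [NormedAddCommGroup E] [NormedSpace ℝ E]
    (q : ℕ) (C : ℕ → E →L[ℝ] E) (f : ℤ → E → ℝ) (x : ℤ → E) (s : ℤ) : ℝ :=
  ∑ t ∈ Finset.Icc 1 s, (f t (x t) + ‖x t - ∑ i ∈ Finset.Icc 1 q, C i (x (t - (i : ℤ)))‖)

/-- In the multi-step memory setting with β = ∑_{i=1}^q ‖C_i‖, the Robust
algorithm is strictly max((β+1)/α, 1)-competitive against the optimal offline algorithm. -/
theorem stmt2 {E : Type*} [NormedAddCommGroup E] [NormedSpace ℝ E]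
    (T : ℤ) (q : ℕ) (C : ℕ → E →L[ℝ] E) (β : ℝ) (hβ : β = ∑ i ∈ Finset.Icc 1 q, ‖C i‖)
    (α : ℝ) (hα : 0 < α) (f : ℤ → E → ℝ)
    (hf : ∀ t z, 0 ≤ f t z)
    (v : ℤ → E)
    (hmin : ∀ t z, f t (v t) ≤ f t z)
    (hpoly : ∀ t z, α * ‖z - v t‖ ≤ f t z - f t (v t))
    (xπ : ℤ → E) (hπ : ∀ t : ℤ, 1 ≤ t → xπ t = v t)
    (xstar : ℤ → E) (hinit : ∀ s : ℤ, s ≤ 0 → xπ s = xstar s) :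
    costM q C f xπ T ≤ max ((β + 1) / α) 1 * costM q C f xstar T := by
  have hβnn : 0 ≤ β := hβ ▸ Finset.sum_nonneg fun i _ => norm_nonneg _
  set c := (β + 1) / α with hc
  have hc0 : 0 ≤ c := div_nonneg (by linarith) hα.le
  set S := Finset.Icc (1:ℤ) T with hS
  set δ : ℤ → ℝ := fun s => ‖xπ s - xstar s‖ with hδ
  have hδnn : ∀ s, 0 ≤ δ s := fun s => norm_nonneg _
  have hδ0 : ∀ s : ℤ, s ≤ 0 → δ s = 0 := by
    intro s hs; simp [hδ, hinit s hs]
  set Fv := ∑ t ∈ S, f t (v t) with hFv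
  set Fs := ∑ t ∈ S, f t (xstar t) with hFs
  set Mov := ∑ t ∈ S, ‖xstar t - ∑ i ∈ Finset.Icc 1 q, C i (xstar (t - (i:ℤ)))‖ with hMov
  set Δ := ∑ t ∈ S, δ t with hΔ
  have hFvnn : 0 ≤ Fv := Finset.sum_nonneg fun t _ => hf t _
  have hFsnn : 0 ≤ Fs := Finset.sum_nonneg fun t _ => hf t _
  have hMovnn : 0 ≤ Mov := Finset.sum_nonneg fun t _ => norm_nonneg _
  have hΔnn : 0 ≤ Δ := Finset.sum_nonneg fun t _ => hδnn t
  have hFvFs : Fv ≤ Fs := Finset.sum_le_sum fun t _ => hmin t _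
  -- shifted sums of δ are bounded by Δ
  have hshift : ∀ i : ℕ, 1 ≤ i → ∑ t ∈ S, δ (t - (i:ℤ)) ≤ Δ := by
    intro i hi
    have hi1 : (1:ℤ) ≤ (i:ℤ) := by exact_mod_cast hi
    have h1 : ∑ t ∈ S.filter (fun t => 1 ≤ t - (i:ℤ)), δ (t - (i:ℤ))
        = ∑ t ∈ S, δ (t - (i:ℤ)) := by
      apply Finset.sum_filter_of_ne
      intro t _ hne
      by_contra hle
      exact hne (hδ0 _ (by omega))
    have h2 : ∑ t ∈ S.filter (fun t => 1 ≤ t - (i:ℤ)), δ (t - (i:ℤ))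
        = ∑ s ∈ (S.filter (fun t => 1 ≤ t - (i:ℤ))).image (fun t => t - (i:ℤ)), δ s := by
      rw [Finset.sum_image]
      intro x _ y _ h
      have h' : x - (i:ℤ) = y - (i:ℤ) := h
      omega
    have h3 : (S.filter (fun t => 1 ≤ t - (i:ℤ))).image (fun t => t - (i:ℤ)) ⊆ S := by
      intro s hs
      simp only [Finset.mem_image, Finset.mem_filter, hS, Finset.mem_Icc] at hs ⊢
      obtain ⟨t, ⟨⟨ht1, ht2⟩, ht3⟩, rfl⟩ := hs
      omega
    rw [← h1, h2]
    exact Finset.sum_le_sum_of_subset_of_nonneg h3 fun s _ _ => hδnn s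
  -- pointwise bound
  have key : ∀ t ∈ S, f t (xπ t) + ‖xπ t - ∑ i ∈ Finset.Icc 1 q, C i (xπ (t - (i:ℤ)))‖
      ≤ f t (v t) + δ t + ‖xstar t - ∑ i ∈ Finset.Icc 1 q, C i (xstar (t - (i:ℤ)))‖
        + ∑ i ∈ Finset.Icc 1 q, ‖C i‖ * δ (t - (i:ℤ)) := by
    intro t ht
    have ht1 : 1 ≤ t := by
      rw [hS, Finset.mem_Icc] at ht; exact ht.1
    have hx : f t (xπ t) = f t (v t) := by rw [hπ t ht1]
    have tri : ‖xπ t - ∑ i ∈ Finset.Icc 1 q, C i (xπ (t - (i:ℤ)))‖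
        ≤ δ t + ‖xstar t - ∑ i ∈ Finset.Icc 1 q, C i (xstar (t - (i:ℤ)))‖
          + ∑ i ∈ Finset.Icc 1 q, ‖C i‖ * δ (t - (i:ℤ)) := by
      have h4 := dist_triangle4 (xπ t) (xstar t)
        (∑ i ∈ Finset.Icc 1 q, C i (xstar (t - (i:ℤ))))
        (∑ i ∈ Finset.Icc 1 q, C i (xπ (t - (i:ℤ))))
      simp only [dist_eq_norm] at h4
      have hlast : ‖(∑ i ∈ Finset.Icc 1 q, C i (xstar (t - (i:ℤ))))
          - ∑ i ∈ Finset.Icc 1 q, C i (xπ (t - (i:ℤ)))‖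
          ≤ ∑ i ∈ Finset.Icc 1 q, ‖C i‖ * δ (t - (i:ℤ)) := by
        rw [← Finset.sum_sub_distrib]
        refine le_trans (norm_sum_le _ _) (Finset.sum_le_sum fun i _ => ?_)
        rw [← map_sub]
        refine le_trans ((C i).le_opNorm _) ?_
        have : ‖xstar (t - (i:ℤ)) - xπ (t - (i:ℤ))‖ = δ (t - (i:ℤ)) := by
          rw [hδ]; exact norm_sub_rev _ _
        rw [this]
      calc ‖xπ t - ∑ i ∈ Finset.Icc 1 q, C i (xπ (t - (i:ℤ)))‖
          ≤ ‖xπ t - xstar t‖ + ‖xstar t - ∑ i ∈ Finset.Icc 1 q, C i (xstar (t - (i:ℤ)))‖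
            + ‖(∑ i ∈ Finset.Icc 1 q, C i (xstar (t - (i:ℤ))))
              - ∑ i ∈ Finset.Icc 1 q, C i (xπ (t - (i:ℤ)))‖ := h4
        _ ≤ δ t + ‖xstar t - ∑ i ∈ Finset.Icc 1 q, C i (xstar (t - (i:ℤ)))‖
            + ∑ i ∈ Finset.Icc 1 q, ‖C i‖ * δ (t - (i:ℤ)) := by
            rw [hδ]; exact add_le_add le_rfl hlast
    linarith [tri, hx.le, hx.ge]
  -- sum the pointwise bound
  have hsum : costM q C f xπ T ≤ Fv + Δ + Mov
      + ∑ t ∈ S, ∑ i ∈ Finset.Icc 1 q, ‖C i‖ * δ (t - (i:ℤ)) := by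
    have := Finset.sum_le_sum key
    rw [costM]
    simp only [Finset.sum_add_distrib] at this
    rw [hFv, hMov, hΔ]
    rw [← hS, Finset.sum_add_distrib]
    linarith [this]
  -- bound the double sum by β * Δ
  have hdouble : ∑ t ∈ S, ∑ i ∈ Finset.Icc 1 q, ‖C i‖ * δ (t - (i:ℤ)) ≤ β * Δ := by
    rw [Finset.sum_comm, hβ, Finset.sum_mul]
    refine Finset.sum_le_sum fun i hi => ?_
    rw [← Finset.mul_sum]
    have hi1 : 1 ≤ i := (Finset.mem_Icc.mp hi).1
    exact mul_le_mul_of_nonneg_left (hshift i hi1) (norm_nonneg _)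
  -- α Δ ≤ Fs - Fv
  have hαΔ : α * Δ ≤ Fs - Fv := by
    rw [hΔ, Finset.mul_sum, hFs, hFv, ← Finset.sum_sub_distrib]
    refine Finset.sum_le_sum fun t ht => ?_
    have ht1 : 1 ≤ t := by rw [hS, Finset.mem_Icc] at ht; exact ht.1
    have : δ t = ‖xstar t - v t‖ := by
      rw [hδ]; simp only [hπ t ht1]; exact norm_sub_rev _ _
    rw [this]
    exact hpoly t (xstar t)
  have hcΔ : (β + 1) * Δ ≤ c * (Fs - Fv) := by
    have : (β + 1) * Δ = c * (α * Δ) := by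
      rw [hc]; field_simp
    rw [this]
    exact mul_le_mul_of_nonneg_left hαΔ hc0
  -- final cost of xstar
  have hstar : costM q C f xstar T = Fs + Mov := by
    rw [costM, Finset.sum_add_distrib, hFs, hMov, hS]
  set M := max c 1 with hM
  have hM1 : (1:ℝ) ≤ M := le_max_right _ _
  have hMc : c ≤ M := le_max_left _ _
  have hkey2 : Fv + c * (Fs - Fv) ≤ M * Fs := by
    rcases le_total c 1 with h | h
    · have hM' : M = 1 := max_eq_right h
      nlinarith
    · have hM' : M = c := max_eq_left h
      nlinarith
  have hMovM : Mov ≤ M * Mov := le_mul_of_one_le_left hMovnn hM1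
  rw [hstar]
  have : costM q C f xπ T ≤ Fv + c * (Fs - Fv) + Mov := by linarith
  calc costM q C f xπ T ≤ Fv + c * (Fs - Fv) + Mov := this
    _ ≤ M * Fs + M * Mov := by linarith
    _ = M * (Fs + Mov) := by ring
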